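/- Let a₊, a₋ ∈ (0,2)\{1}, let C₊, C₋, λ₊, λ₋ > 0 and T > 0, and let ℓ be the GTS Lévy density with parameters (a₊, a₋, C₊, C₋, λ₊, λ₋). Define the score functions s₊(x) = −x for x > 0 and s₊(x) = 0 for x ≤ 0, and s₋(x) = −|x| for x < 0 and s₋(x) = 0 for x ≥ 0 (these are the partial derivatives of log ℓ(x) with respect to λ₊ and λ₋, respectively). Then the Fisher information matrix g_{ij} = T·∫_ℝ s_i(x)·s_j(x)·ℓ(x) dx (indices i, j ∈ {+, −}) is diagonal: g_{+−} = g_{−+} = 0, g_{++} = T·C₊·Γ(2−a₊)/λ₊^{2−a₊}, and g_{−−} = T·C₋·Γ(2−a₋)/λ₋^{2−a₋}; in particular all four integrands are integrable on ℝ. -/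

import Mathlib

open MeasureTheory Real Set

/-- The GTS (generalized tempered stable) Lévy density with parameters
`(a₊, a₋, C₊, C₋, λ₊, λ₋)`. -/
noncomputable def gtsDensity (ap am Cp Cm tp tm : ℝ) (x : ℝ) : ℝ :=
  if 0 < x then Cp * exp (-(tp * x)) * x ^ (-ap - 1)
  else if x < 0 then Cm * exp (-(tm * |x|)) * |x| ^ (-am - 1)
  else 0

/-- Score function `∂ log ℓ / ∂λ₊`: equals `−x` for `x > 0` and `0` otherwise. -/
noncomputable def gtsScorePlus (x : ℝ) : ℝ := if 0 < x then -x else 0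

/-- Score function `∂ log ℓ / ∂λ₋`: equals `−|x|` for `x < 0` and `0` otherwise. -/
noncomputable def gtsScoreMinus (x : ℝ) : ℝ := if x < 0 then -|x| else 0

lemma gts_aux_integrable {C l a : ℝ} (hl : 0 < l) (ha2 : a < 2) :
    Integrable ((Ioi (0:ℝ)).indicator
      (fun x => C * (x ^ (1 - a) * exp (-(l * x))))) := by
  rw [integrable_indicator_iff measurableSet_Ioi]
  have h := integrableOn_rpow_mul_exp_neg_mul_rpow (p := 1) (s := 1 - a) (b := l)
    (by linarith) one_pos hl
  simp only [rpow_one] at h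
  have := h.const_mul C
  simp only [neg_mul] at this
  exact this

lemma gts_aux_integral {C l a : ℝ} (hl : 0 < l) (ha2 : a < 2) :
    ∫ x : ℝ, (Ioi (0:ℝ)).indicator
      (fun x => C * (x ^ (1 - a) * exp (-(l * x)))) x
      = C * Gamma (2 - a) / l ^ (2 - a) := by
  rw [integral_indicator measurableSet_Ioi]
  rw [MeasureTheory.integral_const_mul]
  have h := integral_rpow_mul_exp_neg_mul_Ioi (a := 2 - a) (r := l)
    (by linarith) hl
  have h1 : (2 : ℝ) - a - 1 = 1 - a := by ring
  rw [h1] at h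
  rw [h, one_div, inv_rpow hl.le]
  field_simp

lemma gts_plusfun (ap am Cp Cm lp lm : ℝ) :
    (fun x : ℝ => gtsScorePlus x * gtsScorePlus x * gtsDensity ap am Cp Cm lp lm x)
      = (Ioi (0:ℝ)).indicator (fun x => Cp * (x ^ (1 - ap) * exp (-(lp * x)))) := by
  funext x
  by_cases hx : 0 < x
  · simp only [gtsScorePlus, gtsDensity, if_pos hx, indicator_of_mem (mem_Ioi.mpr hx)]
    have h2 : x ^ (1 - ap) = x * x * x ^ (-ap - 1) := by
      rw [show x * x = x ^ (2:ℝ) by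
        rw [show (2:ℝ) = ((2:ℕ):ℝ) by norm_num, rpow_natCast]; ring,
        ← rpow_add hx]
      congr 1; ring
    rw [h2]; ring
  · simp only [gtsScorePlus, if_neg hx,
      indicator_of_notMem (fun h => hx (mem_Ioi.mp h))]
    ring

lemma gts_minusfun (ap am Cp Cm lp lm : ℝ) :
    (fun x : ℝ => gtsScoreMinus x * gtsScoreMinus x * gtsDensity ap am Cp Cm lp lm x)
      = fun x : ℝ => (Ioi (0:ℝ)).indicator
          (fun y => Cm * (y ^ (1 - am) * exp (-(lm * y)))) (-x) := by
  funext x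
  by_cases hx : x < 0
  · have hnx : (0:ℝ) < -x := by linarith
    have habs : |x| = -x := abs_of_neg hx
    simp only [gtsScoreMinus, gtsDensity, if_pos hx, if_neg (not_lt.mpr hx.le),
      indicator_of_mem (mem_Ioi.mpr hnx), habs]
    have h2 : (-x) ^ (1 - am) = (-x) * (-x) * (-x) ^ (-am - 1) := by
      rw [show (-x) * (-x) = (-x) ^ (2:ℝ) by
        rw [show (2:ℝ) = ((2:ℕ):ℝ) by norm_num, rpow_natCast]; ring,
        ← rpow_add hnx]
      congr 1; ring
    rw [h2]; ring
  · have hnx : ¬ (0:ℝ) < -x := by simp at hx ⊢; exact hx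
    simp only [gtsScoreMinus, if_neg hx,
      indicator_of_notMem (fun h => hnx (mem_Ioi.mp h))]
    ring

lemma gts_crossfun (ap am Cp Cm lp lm : ℝ) :
    (fun x : ℝ => gtsScorePlus x * gtsScoreMinus x * gtsDensity ap am Cp Cm lp lm x)
      = fun _ => (0:ℝ) := by
  funext x
  rcases lt_trichotomy x 0 with h | h | h
  · simp [gtsScorePlus, not_lt.mpr h.le]
  · simp [gtsScorePlus, gtsScoreMinus, h]
  · simp [gtsScoreMinus, not_lt.mpr h.le]

lemma gts_crossfun' (ap am Cp Cm lp lm : ℝ) :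
    (fun x : ℝ => gtsScoreMinus x * gtsScorePlus x * gtsDensity ap am Cp Cm lp lm x)
      = fun _ => (0:ℝ) := by
  funext x
  rcases lt_trichotomy x 0 with h | h | h
  · simp [gtsScorePlus, not_lt.mpr h.le]
  · simp [gtsScorePlus, gtsScoreMinus, h]
  · simp [gtsScoreMinus, not_lt.mpr h.le]

lemma gts_comp_neg_integrable {f : ℝ → ℝ} (hf : Integrable f) :
    Integrable (fun x : ℝ => f (-x)) := by
  have := (measurableEmbedding_neg (α := ℝ)).integrable_map_iff (g := f)
    (μ := (volume : Measure ℝ))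
  rw [Measure.map_neg_eq_self (volume : Measure ℝ)] at this
  exact this.mp hf

lemma gts_comp_neg_integral (f : ℝ → ℝ) :
    ∫ x : ℝ, f (-x) = ∫ x : ℝ, f x := by
  have := (measurableEmbedding_neg (α := ℝ)).integral_map
    (μ := (volume : Measure ℝ)) (g := f)
  rw [Measure.map_neg_eq_self (volume : Measure ℝ)] at this
  exact this.symm

/-- The Fisher information matrix of GTS processes in the coordinates `(λ₊, λ₋)`
is diagonal, with the stated diagonal entries. -/
theorem gts_fisher_information (ap am Cp Cm lp lm T : ℝ)
    (hap : ap ∈ Ioo (0:ℝ) 2) (hap1 : ap ≠ 1)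
    (ham : am ∈ Ioo (0:ℝ) 2) (ham1 : am ≠ 1)
    (hCp : 0 < Cp) (hCm : 0 < Cm) (hlp : 0 < lp) (hlm : 0 < lm) (hT : 0 < T) :
    Integrable (fun x : ℝ =>
      gtsScorePlus x * gtsScorePlus x * gtsDensity ap am Cp Cm lp lm x) ∧
    Integrable (fun x : ℝ =>
      gtsScorePlus x * gtsScoreMinus x * gtsDensity ap am Cp Cm lp lm x) ∧
    Integrable (fun x : ℝ =>
      gtsScoreMinus x * gtsScorePlus x * gtsDensity ap am Cp Cm lp lm x) ∧
    Integrable (fun x : ℝ =>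
      gtsScoreMinus x * gtsScoreMinus x * gtsDensity ap am Cp Cm lp lm x) ∧
    T * ∫ x : ℝ, gtsScorePlus x * gtsScoreMinus x * gtsDensity ap am Cp Cm lp lm x = 0 ∧
    T * ∫ x : ℝ, gtsScoreMinus x * gtsScorePlus x * gtsDensity ap am Cp Cm lp lm x = 0 ∧
    T * ∫ x : ℝ, gtsScorePlus x * gtsScorePlus x * gtsDensity ap am Cp Cm lp lm x
      = T * Cp * Gamma (2 - ap) / lp ^ (2 - ap) ∧
    T * ∫ x : ℝ, gtsScoreMinus x * gtsScoreMinus x * gtsDensity ap am Cp Cm lp lm x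
      = T * Cm * Gamma (2 - am) / lm ^ (2 - am) := by
  have hPP := gts_plusfun ap am Cp Cm lp lm
  have hMM := gts_minusfun ap am Cp Cm lp lm
  have hPM := gts_crossfun ap am Cp Cm lp lm
  have hMP := gts_crossfun' ap am Cp Cm lp lm
  have hintp : Integrable ((Ioi (0:ℝ)).indicator
      (fun x => Cp * (x ^ (1 - ap) * exp (-(lp * x))))) :=
    gts_aux_integrable hlp hap.2
  have hintm : Integrable ((Ioi (0:ℝ)).indicator
      (fun x => Cm * (x ^ (1 - am) * exp (-(lm * x))))) :=
    gts_aux_integrable hlm ham.2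
  refine ⟨by rw [hPP]; exact hintp,
    by rw [hPM]; exact integrable_zero _ _ _,
    by rw [hMP]; exact integrable_zero _ _ _,
    by rw [hMM]; exact gts_comp_neg_integrable hintm,
    ?_, ?_, ?_, ?_⟩
  · rw [hPM]; simp
  · rw [hMP]; simp
  · rw [hPP, gts_aux_integral hlp hap.2]; ring
  · rw [hMM, gts_comp_neg_integral, gts_aux_integral hlm ham.2]; ring
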